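/- Let $\ell \ge 2$ and let $W$ be a nonnegative random variable with $E[W] = 1$. Suppose $Y$ is a nonnegative integrable random variable with $0 < E[Y\log Y] < \infty$ satisfying the equality in law $\ell Y = \sum_{j=0}^{\ell-1} W_j Y(j)$ with $W_0,\dots,W_{\ell-1}$ i.i.d. copies of $W$, $Y(0),\dots,Y(\ell-1)$ i.i.d. copies of $Y$, all independent, and $E[Y] = 1$, and assume $E[WY\log(WY)]$ is finite. Then $E[W\log W] < \ln \ell$. -/

import Mathlib

open MeasureTheory ProbabilityTheory

private lemma mul_log_expand {a b : ℝ} (ha : 0 ≤ a) (hb : 0 ≤ b) :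
    a * b * Real.log (a * b) = (a * Real.log a) * b + a * (b * Real.log b) := by
  rcases eq_or_lt_of_le ha with h | h
  · simp [← h]
  rcases eq_or_lt_of_le hb with h' | h'
  · simp [← h']
  rw [Real.log_mul h.ne' h'.ne']; ring

private lemma sum_mul_log_le {n : ℕ} (a : Fin n → ℝ) (ha : ∀ i, 0 ≤ a i) :
    ∑ i, a i * Real.log (a i) ≤ (∑ i, a i) * Real.log (∑ i, a i) := by
  rw [Finset.sum_mul]
  refine Finset.sum_le_sum fun i _ => ?_
  rcases eq_or_lt_of_le (ha i) with h | h
  · simp [← h]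
  · exact mul_le_mul_of_nonneg_left
      (Real.log_le_log h (Finset.single_le_sum (fun i _ => ha i) (Finset.mem_univ i))) (ha i)

private lemma sum_mul_log_lt {n : ℕ} (a : Fin n → ℝ) (ha : ∀ i, 0 ≤ a i) {i j : Fin n}
    (hij : i ≠ j) (hi : 0 < a i) (hj : 0 < a j) :
    ∑ k, a k * Real.log (a k) < (∑ k, a k) * Real.log (∑ k, a k) := by
  have hsum2 : a i + a j ≤ ∑ k, a k := by
    have h := Finset.sum_le_sum_of_subset_of_nonneg (Finset.subset_univ ({i, j} : Finset (Fin n)))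
      (fun k _ _ => ha k)
    rwa [Finset.sum_pair hij] at h
  rw [Finset.sum_mul]
  refine Finset.sum_lt_sum (fun k _ => ?_) ⟨i, Finset.mem_univ i, ?_⟩
  · rcases eq_or_lt_of_le (ha k) with h | h
    · simp [← h]
    · exact mul_le_mul_of_nonneg_left
        (Real.log_le_log h (Finset.single_le_sum (fun i _ => ha i) (Finset.mem_univ k))) (ha k)
  · exact mul_lt_mul_of_pos_left (Real.log_lt_log hi (by linarith)) hi

theorem stmt_19 {Ω : Type*} [MeasurableSpace Ω] (μ : Measure Ω) [IsProbabilityMeasure μ]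
    (ℓ : ℕ) (hℓ : 2 ≤ ℓ)
    (W Y : Ω → ℝ) (hWnn : ∀ ω, 0 ≤ W ω) (hYnn : ∀ ω, 0 ≤ Y ω)
    (hWexp : ∫ ω, W ω ∂μ = 1) (hYint : Integrable Y μ) (hYexp : ∫ ω, Y ω ∂μ = 1)
    (hYlog : Integrable (fun ω => Y ω * Real.log (Y ω)) μ)
    (hYlogpos : 0 < ∫ ω, Y ω * Real.log (Y ω) ∂μ)
    (Wf Zf : Fin ℓ → Ω → ℝ)
    (hind : iIndepFun (Sum.elim Wf Zf) μ)
    (hWd : ∀ j, IdentDistrib (Wf j) W μ μ)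
    (hZd : ∀ j, IdentDistrib (Zf j) Y μ μ)
    (heq : IdentDistrib (fun ω => (ℓ : ℝ) * Y ω) (fun ω => ∑ j, Wf j ω * Zf j ω) μ μ)
    (hWYlog : ∀ j, Integrable (fun ω => Wf j ω * Zf j ω * Real.log (Wf j ω * Zf j ω)) μ) :
    Integrable (fun ω => W ω * Real.log (W ω)) μ ∧
    ∫ ω, W ω * Real.log (W ω) ∂μ < Real.log ℓ := by
  have mlog : Measurable (fun x : ℝ => x * Real.log x) := measurable_id.mul Real.measurable_log
  have hWint : Integrable W μ := by
    by_contra h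
    rw [integral_undef h] at hWexp; norm_num at hWexp
  -- nonnegativity a.e. of the copies
  have hWfnn : ∀ j, ∀ᵐ ω ∂μ, 0 ≤ Wf j ω := by
    intro j
    have h1 : μ (Wf j ⁻¹' Set.Iio 0) = μ (W ⁻¹' Set.Iio 0) :=
      (hWd j).measure_mem_eq measurableSet_Iio
    have h2 : W ⁻¹' Set.Iio 0 = ∅ := by
      ext ω; simp [Set.mem_preimage, not_lt.mpr (hWnn ω)]
    rw [ae_iff]
    have : {ω | ¬ 0 ≤ Wf j ω} = Wf j ⁻¹' Set.Iio 0 := by ext ω; simp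
    rw [this, h1, h2, measure_empty]
  have hZfnn : ∀ j, ∀ᵐ ω ∂μ, 0 ≤ Zf j ω := by
    intro j
    have h1 : μ (Zf j ⁻¹' Set.Iio 0) = μ (Y ⁻¹' Set.Iio 0) :=
      (hZd j).measure_mem_eq measurableSet_Iio
    have h2 : Y ⁻¹' Set.Iio 0 = ∅ := by
      ext ω; simp [Set.mem_preimage, not_lt.mpr (hYnn ω)]
    rw [ae_iff]
    have : {ω | ¬ 0 ≤ Zf j ω} = Zf j ⁻¹' Set.Iio 0 := by ext ω; simp
    rw [this, h1, h2, measure_empty]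
  -- positivity of μ(Y > 0), μ(W > 0)
  have hposmeas : ∀ (f : Ω → ℝ), (∀ ω, 0 ≤ f ω) → Integrable f μ → (∫ ω, f ω ∂μ = 1) →
      0 < μ (f ⁻¹' Set.Ioi 0) := by
    intro f hfn hfi hfe
    rcases eq_or_lt_of_le (show 0 ≤ μ (f ⁻¹' Set.Ioi 0) from zero_le) with h | h
    · exfalso
      have hf0 : f =ᵐ[μ] 0 := by
        rw [Filter.EventuallyEq, ae_iff]
        refine measure_mono_null (fun ω hω => ?_) h.symm
        simp only [Set.mem_setOf_eq, Pi.zero_apply] at hω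
        exact lt_of_le_of_ne (hfn ω) (Ne.symm hω)
      rw [integral_congr_ae hf0] at hfe; simp at hfe
    · exact h
  have hYpos : 0 < μ (Y ⁻¹' Set.Ioi 0) := hposmeas Y hYnn hYint hYexp
  have hWpos : 0 < μ (W ⁻¹' Set.Ioi 0) := hposmeas W hWnn hWint hWexp
  -- Step A: integrability of W log W
  have hℓ0 : 0 < ℓ := by omega
  have hWlog : Integrable (fun ω => W ω * Real.log (W ω)) μ := by
    have hW0 : IndepFun (Wf (⟨0, hℓ0⟩ : Fin ℓ)) (Zf (⟨0, hℓ0⟩ : Fin ℓ)) μ :=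
      hind.indepFun (show (Sum.inl (⟨0, hℓ0⟩ : Fin ℓ) : Fin ℓ ⊕ Fin ℓ) ≠ Sum.inr (⟨0, hℓ0⟩ : Fin ℓ) by simp)
    have hWm : AEMeasurable (Wf (⟨0, hℓ0⟩ : Fin ℓ)) μ := (hWd (⟨0, hℓ0⟩ : Fin ℓ)).aemeasurable_fst
    have hZm : AEMeasurable (Zf (⟨0, hℓ0⟩ : Fin ℓ)) μ := (hZd (⟨0, hℓ0⟩ : Fin ℓ)).aemeasurable_fst
    have hprodlaw : μ.map (fun ω => (Wf (⟨0, hℓ0⟩ : Fin ℓ) ω, Zf (⟨0, hℓ0⟩ : Fin ℓ) ω)) = (μ.map W).prod (μ.map Y) := by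
      rw [(indepFun_iff_map_prod_eq_prod_map_map hWm hZm).mp hW0, (hWd (⟨0, hℓ0⟩ : Fin ℓ)).map_eq, (hZd (⟨0, hℓ0⟩ : Fin ℓ)).map_eq]
    have hFmeas : Measurable (fun p : ℝ × ℝ => p.1 * p.2 * Real.log (p.1 * p.2)) := by
      have : Measurable (fun p : ℝ × ℝ => p.1 * p.2) := measurable_fst.mul measurable_snd
      exact mlog.comp this
    have hFint : Integrable (fun p : ℝ × ℝ => p.1 * p.2 * Real.log (p.1 * p.2))
        ((μ.map W).prod (μ.map Y)) := by
      rw [← hprodlaw]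
      rw [integrable_map_measure hFmeas.aestronglyMeasurable (hWm.prodMk hZm)]
      exact hWYlog (⟨0, hℓ0⟩ : Fin ℓ)
    have : IsProbabilityMeasure (μ.map W) := Measure.isProbabilityMeasure_map hWint.aemeasurable
    have : IsProbabilityMeasure (μ.map Y) := Measure.isProbabilityMeasure_map hYint.aemeasurable
    have hae := hFint.prod_left_ae
    -- get some z > 0 with the slice integrable
    obtain ⟨z, hz, hzint⟩ : ∃ z, 0 < z ∧
        Integrable (fun w => w * z * Real.log (w * z)) (μ.map W) := by
      by_contra hcon
      push_neg at hcon
      have hsub : Set.Ioi (0 : ℝ) ⊆ {z | ¬ Integrable (fun w => w * z * Real.log (w * z)) (μ.map W)} :=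
        fun z hz => hcon z hz
      have h0 : μ.map Y (Set.Ioi (0 : ℝ)) = 0 :=
        measure_mono_null hsub (ae_iff.mp hae)
      rw [Measure.map_apply_of_aemeasurable hYint.aemeasurable measurableSet_Ioi] at h0
      exact absurd h0 hYpos.ne'
    -- a.e. w ≥ 0 under μ.map W
    have hwnn : ∀ᵐ w ∂(μ.map W), 0 ≤ w := by
      rw [ae_iff]
      have : {w : ℝ | ¬ 0 ≤ w} = Set.Iio 0 := by ext w; simp
      rw [this, Measure.map_apply_of_aemeasurable hWint.aemeasurable measurableSet_Iio]
      have : W ⁻¹' Set.Iio 0 = ∅ := by ext ω; simp [not_lt.mpr (hWnn ω)]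
      rw [this, measure_empty]
    have heqslice : (fun w : ℝ => w * z * Real.log (w * z)) =ᵐ[μ.map W]
        (fun w => z * (w * Real.log w) + (z * Real.log z) * w) := by
      filter_upwards [hwnn] with w hw
      rw [mul_log_expand hw hz.le]; ring
    have hsum : Integrable (fun w : ℝ => z * (w * Real.log w) + (z * Real.log z) * w)
        (μ.map W) := hzint.congr heqslice
    have hid : Integrable (fun w : ℝ => w) (μ.map W) := by
      have : Integrable (id : ℝ → ℝ) (μ.map W) := by
        rw [integrable_map_measure aestronglyMeasurable_id hWint.aemeasurable]
        exact hWint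
      exact this
    have h1 : Integrable (fun w : ℝ => z * (w * Real.log w)) (μ.map W) := by
      have := hsum.sub (hid.const_mul (z * Real.log z))
      exact this.congr (ae_of_all _ fun w => by simp only [Pi.sub_apply]; ring)
    have h2 : Integrable (fun w : ℝ => w * Real.log w) (μ.map W) := by
      have := h1.const_mul z⁻¹
      exact this.congr (ae_of_all _ fun w => by field_simp)
    rw [integrable_map_measure mlog.aestronglyMeasurable hWint.aemeasurable] at h2
    exact h2
  refine ⟨hWlog, ?_⟩
  -- identically distributed copies: integrability and integrals
  have hWfint : ∀ j, Integrable (Wf j) μ := fun j => ((hWd j).integrable_iff).mpr hWint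
  have hZfint : ∀ j, Integrable (Zf j) μ := fun j => ((hZd j).integrable_iff).mpr hYint
  have hWflog : ∀ j, Integrable (fun ω => Wf j ω * Real.log (Wf j ω)) μ :=
    fun j => (((hWd j).comp mlog).integrable_iff).mpr hWlog
  have hZflog : ∀ j, Integrable (fun ω => Zf j ω * Real.log (Zf j ω)) μ :=
    fun j => (((hZd j).comp mlog).integrable_iff).mpr hYlog
  have hWZindep : ∀ j, IndepFun (Wf j) (Zf j) μ := by
    intro j
    exact hind.indepFun (show (Sum.inl j : Fin ℓ ⊕ Fin ℓ) ≠ Sum.inr j by simp)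
  -- Step B: value of each term
  have hterm_val : ∀ j, ∫ ω, Wf j ω * Zf j ω * Real.log (Wf j ω * Zf j ω) ∂μ =
      (∫ ω, W ω * Real.log (W ω) ∂μ) + ∫ ω, Y ω * Real.log (Y ω) ∂μ := by
    intro j
    have hindc : IndepFun (fun ω => Wf j ω * Real.log (Wf j ω)) (Zf j) μ :=
      (hWZindep j).comp mlog measurable_id
    have hindc2 : IndepFun (Wf j) (fun ω => Zf j ω * Real.log (Zf j ω)) μ :=
      (hWZindep j).comp measurable_id mlog
    have h1 : Integrable (fun ω => (Wf j ω * Real.log (Wf j ω)) * Zf j ω) μ :=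
      hindc.integrable_mul (hWflog j) (hZfint j)
    have h2 : Integrable (fun ω => Wf j ω * (Zf j ω * Real.log (Zf j ω))) μ :=
      hindc2.integrable_mul (hWfint j) (hZflog j)
    have heqa : (fun ω => Wf j ω * Zf j ω * Real.log (Wf j ω * Zf j ω)) =ᵐ[μ]
        (fun ω => (Wf j ω * Real.log (Wf j ω)) * Zf j ω
          + Wf j ω * (Zf j ω * Real.log (Zf j ω))) := by
      filter_upwards [hWfnn j, hZfnn j] with ω ha hb
      exact mul_log_expand ha hb
    have e1 : ∫ ω, (Wf j ω * Real.log (Wf j ω)) * Zf j ω ∂μ =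
        (∫ ω, Wf j ω * Real.log (Wf j ω) ∂μ) * ∫ ω, Zf j ω ∂μ :=
      hindc.integral_fun_mul_eq_mul_integral (hWflog j).aestronglyMeasurable (hZfint j).aestronglyMeasurable
    have e2 : ∫ ω, Wf j ω * (Zf j ω * Real.log (Zf j ω)) ∂μ =
        (∫ ω, Wf j ω ∂μ) * ∫ ω, Zf j ω * Real.log (Zf j ω) ∂μ :=
      hindc2.integral_fun_mul_eq_mul_integral (hWfint j).aestronglyMeasurable (hZflog j).aestronglyMeasurable
    have idW : IdentDistrib (fun ω => Wf j ω * Real.log (Wf j ω))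
        (fun ω => W ω * Real.log (W ω)) μ μ := (hWd j).comp mlog
    have idZ : IdentDistrib (fun ω => Zf j ω * Real.log (Zf j ω))
        (fun ω => Y ω * Real.log (Y ω)) μ μ := (hZd j).comp mlog
    rw [integral_congr_ae heqa, integral_add h1 h2, e1, e2, (hZd j).integral_eq, hYexp,
      (hWd j).integral_eq, hWexp, idW.integral_eq, idZ.integral_eq]
    ring
  -- Step C: LHS
  have hpt : ∀ ω, (ℓ : ℝ) * Y ω * Real.log ((ℓ : ℝ) * Y ω) =
      ((ℓ : ℝ) * Real.log ℓ) * Y ω + (ℓ : ℝ) * (Y ω * Real.log (Y ω)) :=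
    fun ω => mul_log_expand (Nat.cast_nonneg ℓ) (hYnn ω)
  have hLint : Integrable (fun ω => (ℓ : ℝ) * Y ω * Real.log ((ℓ : ℝ) * Y ω)) μ :=
    ((hYint.const_mul _).add (hYlog.const_mul _)).congr (ae_of_all _ fun ω => (hpt ω).symm)
  have hLval : ∫ ω, (ℓ : ℝ) * Y ω * Real.log ((ℓ : ℝ) * Y ω) ∂μ =
      (ℓ : ℝ) * Real.log ℓ + (ℓ : ℝ) * ∫ ω, Y ω * Real.log (Y ω) ∂μ := by
    rw [integral_congr_ae (ae_of_all _ hpt), integral_add (hYint.const_mul _) (hYlog.const_mul _),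
      MeasureTheory.integral_const_mul, MeasureTheory.integral_const_mul, hYexp]
    ring
  have hSid : IdentDistrib (fun ω => (ℓ : ℝ) * Y ω * Real.log ((ℓ : ℝ) * Y ω))
      (fun ω => (∑ j, Wf j ω * Zf j ω) * Real.log (∑ j, Wf j ω * Zf j ω)) μ μ := heq.comp mlog
  have hSint : Integrable
      (fun ω => (∑ j, Wf j ω * Zf j ω) * Real.log (∑ j, Wf j ω * Zf j ω)) μ :=
    hSid.integrable_iff.mp hLint
  have hSval : ∫ ω, (∑ j, Wf j ω * Zf j ω) * Real.log (∑ j, Wf j ω * Zf j ω) ∂μ =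
      (ℓ : ℝ) * Real.log ℓ + (ℓ : ℝ) * ∫ ω, Y ω * Real.log (Y ω) ∂μ := by
    rw [← hSid.integral_eq, hLval]
  -- g : the sum of the terms
  have hgint : Integrable (fun ω => ∑ j, Wf j ω * Zf j ω * Real.log (Wf j ω * Zf j ω)) μ :=
    integrable_finset_sum _ (fun j _ => hWYlog j)
  have hgval : ∫ ω, ∑ j, Wf j ω * Zf j ω * Real.log (Wf j ω * Zf j ω) ∂μ =
      (ℓ : ℝ) * ((∫ ω, W ω * Real.log (W ω) ∂μ) + ∫ ω, Y ω * Real.log (Y ω) ∂μ) := by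
    rw [integral_finset_sum _ (fun j _ => hWYlog j)]
    simp_rw [hterm_val]
    rw [Finset.sum_const, Finset.card_univ, Fintype.card_fin, nsmul_eq_mul]
  -- Step D: strict inequality of integrals
  have hstrict : ∫ ω, ∑ j, Wf j ω * Zf j ω * Real.log (Wf j ω * Zf j ω) ∂μ <
      ∫ ω, (∑ j, Wf j ω * Zf j ω) * Real.log (∑ j, Wf j ω * Zf j ω) ∂μ := by
    have hℓ1' : 1 < ℓ := by omega
    set i0 : Fin ℓ := ⟨0, hℓ0⟩ with hi0def
    set i1 : Fin ℓ := ⟨1, hℓ1'⟩ with hi1def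
    have hi01 : i0 ≠ i1 := Fin.ne_of_val_ne (by norm_num)
    set B : Set Ω := (Wf i0 ⁻¹' Set.Ioi 0) ∩ (Zf i0 ⁻¹' Set.Ioi 0) ∩ (Wf i1 ⁻¹' Set.Ioi 0) ∩
      (Zf i1 ⁻¹' Set.Ioi 0) with hBdef
    have hBmeas : μ B = μ (W ⁻¹' Set.Ioi 0) * μ (Y ⁻¹' Set.Ioi 0) * μ (W ⁻¹' Set.Ioi 0) *
        μ (Y ⁻¹' Set.Ioi 0) := by
      have h := hind.measure_inter_preimage_eq_mul
        (S := ({Sum.inl i0, Sum.inr i0, Sum.inl i1, Sum.inr i1} : Finset (Fin ℓ ⊕ Fin ℓ)))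
        (sets := fun _ => Set.Ioi (0 : ℝ)) (fun i _ => measurableSet_Ioi)
      rw [Finset.set_biInter_insert, Finset.set_biInter_insert, Finset.set_biInter_insert,
        Finset.set_biInter_singleton] at h
      rw [Finset.prod_insert (by simp [hi01]), Finset.prod_insert (by simp [hi01]),
        Finset.prod_insert (by simp [hi01]), Finset.prod_singleton] at h
      simp only [Sum.elim_inl, Sum.elim_inr] at h
      rw [hBdef, Set.inter_assoc, Set.inter_assoc, h,
        (hWd i0).measure_mem_eq measurableSet_Ioi, (hZd i0).measure_mem_eq measurableSet_Ioi,
        (hWd i1).measure_mem_eq measurableSet_Ioi, (hZd i1).measure_mem_eq measurableSet_Ioi]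
      ring
    have hBpos : 0 < μ B := by
      rw [hBmeas]
      exact ENNReal.mul_pos (ENNReal.mul_pos (ENNReal.mul_pos hWpos.ne' hYpos.ne').ne'
        hWpos.ne').ne' hYpos.ne'
    have hall : ∀ᵐ ω ∂μ, ∀ j, 0 ≤ Wf j ω ∧ 0 ≤ Zf j ω := by
      rw [ae_all_iff]
      intro j
      filter_upwards [hWfnn j, hZfnn j] with ω ha hb
      exact ⟨ha, hb⟩
    set hdiff : Ω → ℝ := fun ω => (∑ j, Wf j ω * Zf j ω) * Real.log (∑ j, Wf j ω * Zf j ω) -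
      ∑ j, Wf j ω * Zf j ω * Real.log (Wf j ω * Zf j ω) with hdiffdef
    have hdint : Integrable hdiff μ := hSint.sub hgint
    have hdnn : 0 ≤ᵐ[μ] hdiff := by
      filter_upwards [hall] with ω hω
      have := sum_mul_log_le (fun j => Wf j ω * Zf j ω)
        (fun j => mul_nonneg (hω j).1 (hω j).2)
      simpa [hdiffdef, sub_nonneg] using this
    have hsupp : B ∩ {ω | ∀ j, 0 ≤ Wf j ω ∧ 0 ≤ Zf j ω} ⊆ Function.support hdiff := by
      rintro ω ⟨hB', hg'⟩
      obtain ⟨⟨⟨hw0, hz0⟩, hw1⟩, hz1⟩ := hB'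
      have hlt := sum_mul_log_lt (fun j => Wf j ω * Zf j ω)
        (fun j => mul_nonneg (hg' j).1 (hg' j).2) hi01
        (mul_pos hw0 hz0) (mul_pos hw1 hz1)
      have : 0 < hdiff ω := by simpa [hdiffdef, sub_pos] using hlt
      exact this.ne'
    have hsuppos : 0 < μ (Function.support hdiff) := by
      have hBsub : B ⊆ Function.support hdiff ∪ {ω | ¬ ∀ j, 0 ≤ Wf j ω ∧ 0 ≤ Zf j ω} := by
        intro ω hω
        by_cases hg' : ∀ j, 0 ≤ Wf j ω ∧ 0 ≤ Zf j ω
        · exact Or.inl (hsupp ⟨hω, hg'⟩)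
        · exact Or.inr hg'
      have h0 : μ {ω | ¬ ∀ j, 0 ≤ Wf j ω ∧ 0 ≤ Zf j ω} = 0 := ae_iff.mp hall
      calc 0 < μ B := hBpos
        _ ≤ μ (Function.support hdiff ∪ {ω | ¬ ∀ j, 0 ≤ Wf j ω ∧ 0 ≤ Zf j ω}) :=
          measure_mono hBsub
        _ ≤ μ (Function.support hdiff) + μ {ω | ¬ ∀ j, 0 ≤ Wf j ω ∧ 0 ≤ Zf j ω} :=
          measure_union_le _ _
        _ = μ (Function.support hdiff) := by rw [h0, add_zero]
    have hintpos : 0 < ∫ ω, hdiff ω ∂μ :=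
      (integral_pos_iff_support_of_nonneg_ae hdnn hdint).mpr hsuppos
    have : ∫ ω, hdiff ω ∂μ = (∫ ω, (∑ j, Wf j ω * Zf j ω) * Real.log (∑ j, Wf j ω * Zf j ω) ∂μ)
        - ∫ ω, ∑ j, Wf j ω * Zf j ω * Real.log (Wf j ω * Zf j ω) ∂μ :=
      integral_sub hSint hgint
    linarith [hintpos, this.symm ▸ hintpos]
  rw [hgval, hSval] at hstrict
  have hℓ1 : (2 : ℝ) ≤ (ℓ : ℝ) := by exact_mod_cast hℓ
  nlinarith [hstrict]
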